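/- Let F be a finite set with weights w: F → ℝ_{>0}, and for each ℓ∈F a witness set W_ℓ with |W_ℓ| ∈ {1,2}, the W_ℓ pairwise disjoint, U = ⋃_ℓ W_ℓ, and w̄(u) = w(ℓ)/|W_ℓ| for u ∈ W_ℓ. Define Φ(F) = ∑_{ℓ∈F} H_{|W_ℓ|}·w(ℓ) where H_1=1, H_2=3/2. For any subset D ⊆ U, let F' = {ℓ ∈ F : W_ℓ \ D ≠ ∅} with witness sets W_ℓ \ D. Then Φ(F) − Φ(F') ≥ ∑_{u∈D} w̄(u). -/

import Mathlib

/-- The `q`-th harmonic number as a real number. -/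
noncomputable def H (q : ℕ) : ℝ := ∑ i ∈ Finset.range q, 1 / (i + 1 : ℝ)

lemma H_key (q k : ℕ) (hq : q = 1 ∨ q = 2) (hk : k ≤ q) (w : ℝ) (hw : 0 < w) :
    (k : ℝ) * (w / q) ≤ (H q - H (q - k)) * w := by
  have h0 : H 0 = 0 := by simp [H]
  have h1 : H 1 = 1 := by simp [H]
  have h2 : H 2 = 3 / 2 := by norm_num [H, Finset.sum_range_succ]
  rcases hq with rfl | rfl <;> interval_cases k <;>
    simp [h0, h1, h2] <;> nlinarith

/-- For the potential `Φ(F) = ∑_{ℓ∈F} H_{|W_ℓ|} w(ℓ)` with disjoint witness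
sets of size 1 or 2, removing a set `D ⊆ U` from all witness sets (and dropping links with
empty witness set) decreases `Φ` by at least `∑_{u∈D} wbar u`. -/
theorem stmt3 {α β : Type} [DecidableEq α] [DecidableEq β] (F : Finset α) (w : α → ℝ)
    (hw : ∀ ℓ ∈ F, 0 < w ℓ) (W : α → Finset β)
    (hWcard : ∀ ℓ ∈ F, (W ℓ).card = 1 ∨ (W ℓ).card = 2)
    (hdisj : ∀ ℓ₁ ∈ F, ∀ ℓ₂ ∈ F, ℓ₁ ≠ ℓ₂ → Disjoint (W ℓ₁) (W ℓ₂))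
    (wbar : β → ℝ)
    (hwbar : ∀ ℓ ∈ F, ∀ u ∈ W ℓ, wbar u = w ℓ / (W ℓ).card)
    (D : Finset β) (hD : D ⊆ F.biUnion W) :
    ∑ u ∈ D, wbar u ≤
      (∑ ℓ ∈ F, H (W ℓ).card * w ℓ) -
        ∑ ℓ ∈ F.filter (fun ℓ => (W ℓ \ D).Nonempty), H ((W ℓ \ D).card) * w ℓ := by
  -- extend filtered sum to all of F
  have hfull : ∑ ℓ ∈ F.filter (fun ℓ => (W ℓ \ D).Nonempty), H ((W ℓ \ D).card) * w ℓ
      = ∑ ℓ ∈ F, H ((W ℓ \ D).card) * w ℓ := by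
    apply Finset.sum_subset (Finset.filter_subset _ _)
    intro ℓ hℓ hn
    have h : ¬ (W ℓ \ D).Nonempty := by
      intro h; exact hn (Finset.mem_filter.mpr ⟨hℓ, h⟩)
    rw [Finset.not_nonempty_iff_eq_empty] at h
    simp [h, H]
  rw [hfull, ← Finset.sum_sub_distrib]
  -- decompose D
  have hDeq : D = F.biUnion (fun ℓ => W ℓ ∩ D) := by
    ext u
    simp only [Finset.mem_biUnion, Finset.mem_inter]
    constructor
    · intro hu
      obtain ⟨ℓ, hℓ, huℓ⟩ := Finset.mem_biUnion.mp (hD hu)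
      exact ⟨ℓ, hℓ, huℓ, hu⟩
    · rintro ⟨ℓ, _, _, hu⟩; exact hu
  have hpd : (↑F : Set α).PairwiseDisjoint (fun ℓ => W ℓ ∩ D) := by
    intro ℓ₁ h₁ ℓ₂ h₂ hne
    exact Finset.disjoint_of_subset_left Finset.inter_subset_left
      (Finset.disjoint_of_subset_right Finset.inter_subset_left (hdisj ℓ₁ h₁ ℓ₂ h₂ hne))
  have hL : ∑ u ∈ D, wbar u = ∑ ℓ ∈ F, ∑ u ∈ W ℓ ∩ D, wbar u := by
    conv_lhs => rw [hDeq]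
    exact Finset.sum_biUnion hpd
  rw [hL]
  apply Finset.sum_le_sum
  intro ℓ hℓ
  have hconst : ∑ u ∈ W ℓ ∩ D, wbar u = ((W ℓ ∩ D).card : ℝ) * (w ℓ / (W ℓ).card) := by
    rw [Finset.sum_congr rfl (fun u hu => hwbar ℓ hℓ u (Finset.mem_inter.mp hu).1)]
    rw [Finset.sum_const, nsmul_eq_mul]
  rw [hconst]
  have hcard : (W ℓ \ D).card = (W ℓ).card - (W ℓ ∩ D).card := by
    have := Finset.card_sdiff_add_card_inter (W ℓ) D
    omega
  rw [hcard]
  have := H_key (W ℓ).card ((W ℓ ∩ D).card) (hWcard ℓ hℓ)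
    (Finset.card_le_card Finset.inter_subset_left) (w ℓ) (hw ℓ hℓ)
  linarith
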